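/- Let k ≥ 2, let Γ be a finite simple connected graph, and let Γ' be a k-subgraph of Γ. Let x_1 ∈ Γ', v ∉ Γ', and let P = (x_1, x_2, …, x_l, v) be a shortest path between x_1 and v in Γ with l ≤ k−1. Assume that x_1 has at least 2 neighbors in Γ' other than x_2. Then the subgraph Γ' ∪ P is a k-subgraph of Γ. -/

import Mathlib

variable {V : Type*}

def collapse [DecidableEq V] (u v : V) : Function.End V :=
  fun x => if x = u then v else x

def flowSemigroup [DecidableEq V] (E : V → V → Prop) : Subsemigroup (Function.End V) :=
  Subsemigroup.closure {f | ∃ u v, E u v ∧ f = collapse u v}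

def defectGroup [DecidableEq V] (E : V → V → Prop) (K : Set V) :
    Subgroup (Equiv.Perm {x : V // x ∉ K}) :=
  Subgroup.closure {p | ∃ s ∈ flowSemigroup E,
    (∀ x ∈ K, s x ∉ K) ∧ ∀ (x : V) (h : x ∉ K), s x = ↑(p ⟨x, h⟩)}

/-- A `k`-subgraph of `Γ`: a connected subgraph with more than `k` vertices whose defect
`k` group is the full symmetric group on its vertex set minus the defect set. -/
def IsKSubgraph [DecidableEq V] (Γ : SimpleGraph V) (k : ℕ) (H : Γ.Subgraph) : Prop :=
  H.Connected ∧ k < H.verts.ncard ∧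
    ∀ K : Set ↥H.verts, K.ncard = k → defectGroup H.coe.Adj K = ⊤

/-- A maximal `k`-subgraph of `Γ`. -/
def IsMaxKSubgraph [DecidableEq V] (Γ : SimpleGraph V) (k : ℕ) (H : Γ.Subgraph) : Prop :=
  IsKSubgraph Γ k H ∧ ∀ H' : Γ.Subgraph, IsKSubgraph Γ k H' → H ≤ H' → H = H'

/-- A nontrivial `k`-subgraph: one containing a vertex with at least 3 distinct
neighbors inside it. -/
def NontrivialKSubgraph (Γ : SimpleGraph V) (H : Γ.Subgraph) : Prop :=
  ∃ x ∈ H.verts, ∃ a b c : V,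
    a ≠ b ∧ a ≠ c ∧ b ≠ c ∧ H.Adj x a ∧ H.Adj x b ∧ H.Adj x c

/-- A bridge in `Γ`: a path whose interior vertices have degree 2 in `Γ` and each of
whose edges disconnects `Γ` when removed. -/
def IsBridgePath (Γ : SimpleGraph V) {x y : V} (p : Γ.Walk x y) : Prop :=
  p.IsPath ∧ 1 ≤ p.length ∧
    (∀ z ∈ p.support, z ≠ x → z ≠ y → (Γ.neighborSet z).ncard = 2) ∧
    ∀ e ∈ p.edges, ¬ (Γ.deleteEdges {e}).Connected

def IsCycleGraph [Fintype V] (Γ : SimpleGraph V) : Prop :=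
  Γ.Connected ∧ ∀ v : V, (Γ.neighborSet v).ncard = 2

/-- A 2-edge connected subgraph of `Γ`. -/
def Subgraph2EC (Γ : SimpleGraph V) (H : Γ.Subgraph) : Prop :=
  H.Connected ∧ ∀ a b : V, H.Adj a b → (H.deleteEdges {s(a, b)}).Connected

/-- A 2-edge connected graph. -/
def TwoEdgeConnected (Γ : SimpleGraph V) : Prop :=
  Γ.Connected ∧ ∀ a b : V, Γ.Adj a b → (Γ.deleteEdges {s(a, b)}).Connected

section Realize

set_option linter.unusedSectionVars false

variable {X : Type*} [DecidableEq X] (E : X → X → Prop) (K : Set X)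

def Realizes (σ : Equiv.Perm {x : X // x ∉ K}) : Prop :=
  ∃ s ∈ flowSemigroup E, (∀ x ∈ K, s x ∉ K) ∧ ∀ (x : X) (h : x ∉ K), s x = ↑(σ ⟨x, h⟩)

lemma defectGroup_eq_closure : defectGroup E K = Subgroup.closure {σ | Realizes E K σ} := rfl

variable {E K}

lemma end_mul_apply (s t : Function.End X) (x : X) : (s * t) x = s (t x) := rfl

lemma Realizes.mul {σ τ : Equiv.Perm {x : X // x ∉ K}} (hσ : Realizes E K σ)
    (hτ : Realizes E K τ) : Realizes E K (τ * σ) := by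
  obtain ⟨s, hs, hsK, hsc⟩ := hσ
  obtain ⟨t, ht, htK, htc⟩ := hτ
  refine ⟨t * s, mul_mem ht hs, fun x hx => ?_, fun x hx => ?_⟩
  · rw [end_mul_apply, htc _ (hsK x hx)]
    exact (τ ⟨s x, hsK x hx⟩).2
  · rw [end_mul_apply, hsc x hx, htc _ (σ ⟨x, hx⟩).2]
    simp [Equiv.Perm.mul_apply]

lemma Realizes.pow {σ : Equiv.Perm {x : X // x ∉ K}} (hσ : Realizes E K σ) :
    ∀ n, 1 ≤ n → Realizes E K (σ ^ n)
  | 1, _ => by simpa using hσ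
  | (n+2), _ => by
    have := (Realizes.pow hσ (n+1) (by omega)).mul hσ
    rw [← pow_succ'] at this
    exact this

lemma Realizes.inv [Finite X] {σ : Equiv.Perm {x : X // x ∉ K}} (hσ : Realizes E K σ) :
    Realizes E K σ⁻¹ := by
  rcases eq_or_ne (orderOf σ) 1 with h | h
  · rw [orderOf_eq_one_iff] at h
    subst h; simpa using hσ
  · have hpos : 0 < orderOf σ := orderOf_pos σ
    have h2 : 1 ≤ orderOf σ - 1 := by omega
    have := hσ.pow (orderOf σ - 1) h2
    have key : σ ^ (orderOf σ - 1) = σ⁻¹ := by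
      apply eq_inv_of_mul_eq_one_right
      rw [← pow_succ']
      have : orderOf σ - 1 + 1 = orderOf σ := by omega
      rw [this, pow_orderOf_eq_one]
    rwa [key] at this

lemma defectGroup_eq_top_of_all (h : ∀ σ, Realizes E K σ) : defectGroup E K = ⊤ := by
  rw [defectGroup_eq_closure, eq_top_iff]
  intro σ _
  exact Subgroup.subset_closure (h σ)

lemma realizes_of_top [Finite X] (htop : defectGroup E K = ⊤)
    (hne : ∃ σ, Realizes E K σ) : ∀ σ, Realizes E K σ := by
  obtain ⟨σ₀, hσ₀⟩ := hne
  have hone : Realizes E K 1 := by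
    have := hσ₀.mul hσ₀.inv
    simpa using this
  let Gp : Subgroup (Equiv.Perm {x : X // x ∉ K}) :=
    { carrier := {σ | Realizes E K σ}
      mul_mem' := fun ha hb => by simpa using Realizes.mul hb ha
      one_mem' := hone
      inv_mem' := fun ha => Realizes.inv ha }
  have : defectGroup E K = Gp := by
    rw [defectGroup_eq_closure]
    exact Subgroup.closure_eq Gp
  intro σ
  have : σ ∈ Gp := by rw [← this, htop]; trivial
  exact this

lemma realizes_nonempty_of_top [Finite X] (hnt : Nontrivial {x : X // x ∉ K})
    (htop : defectGroup E K = ⊤) : ∃ σ, Realizes E K σ := by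
  by_contra h
  push_neg at h
  have hempty : {σ | Realizes E K σ} = (∅ : Set _) := by
    ext σ; simp [h σ]
  rw [defectGroup_eq_closure, hempty, Subgroup.closure_empty] at htop
  obtain ⟨y₁, y₂, hy⟩ := hnt
  have : Equiv.swap y₁ y₂ ∈ (⊥ : Subgroup (Equiv.Perm {x : X // x ∉ K})) := by
    rw [htop]; trivial
  rw [Subgroup.mem_bot] at this
  have := congrArg (fun f => f y₁) this
  simp [Equiv.swap_apply_left] at this
  exact hy this.symm

end Realize

section Moves
set_option linter.unusedSectionVars false

open SimpleGraph

variable {X : Type*} [DecidableEq X] {G : SimpleGraph X}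

lemma collapse_apply_self (u v : X) : collapse u v u = v := if_pos rfl

lemma collapse_apply_of_ne {u x : X} (v : X) (h : x ≠ u) : collapse u v x = x := if_neg h

lemma collapse_bijOn {S : Set X} {u t : X} (hu : u ∈ S) (ht : t ∉ S) (hne : t ≠ u) :
    Set.BijOn (collapse t u) Sᶜ ((S \ {u}) ∪ {t})ᶜ := by
  refine ⟨?_, ?_, ?_⟩
  · intro x hx
    simp only [Set.mem_compl_iff] at hx ⊢
    by_cases hxt : x = t
    · subst hxt
      rw [collapse_apply_self]
      intro hmem
      rcases hmem with h1 | h1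
      · exact h1.2 rfl
      · exact hne (Set.mem_singleton_iff.mp h1).symm
    · rw [collapse_apply_of_ne _ hxt]
      intro hmem
      rcases hmem with h1 | h1
      · exact hx h1.1
      · exact hxt (Set.mem_singleton_iff.mp h1)
  · intro x hx y hy hxy
    by_cases hxt : x = t <;> by_cases hyt : y = t
    · rw [hxt, hyt]
    · rw [hxt, collapse_apply_self, collapse_apply_of_ne _ hyt] at hxy
      exact absurd (hxy ▸ hu) hy
    · rw [hyt, collapse_apply_self, collapse_apply_of_ne _ hxt] at hxy
      exact absurd (hxy ▸ hu) hx
    · rwa [collapse_apply_of_ne _ hxt, collapse_apply_of_ne _ hyt] at hxy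
  · intro z hz
    simp only [Set.mem_compl_iff, Set.mem_union, Set.mem_diff, Set.mem_singleton_iff,
      not_or, not_and, not_not] at hz
    obtain ⟨h1, h2⟩ := hz
    by_cases hzu : z = u
    · exact ⟨t, ht, by rw [collapse_apply_self, hzu]⟩
    · refine ⟨z, fun hzS => hzu (h1 hzS), collapse_apply_of_ne _ h2⟩

/-- Push contents along a walk: composite of collapses along the edges. -/
def pushAlong : ∀ {a b : X}, G.Walk a b → Function.End X
  | _, _, SimpleGraph.Walk.nil => 1
  | a, _, SimpleGraph.Walk.cons (v := c) _ W => pushAlong W * collapse a c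

lemma pushAlong_apply : ∀ {a b : X} (W : G.Walk a b) (x : X),
    pushAlong W x = if x ∈ W.support then b else x
  | a, _, SimpleGraph.Walk.nil, x => by
    by_cases hxa : x = a <;> simp [pushAlong, hxa, Function.End.one_def]
  | a, b, SimpleGraph.Walk.cons (v := c) h W, x => by
    have : pushAlong (SimpleGraph.Walk.cons h W) x = pushAlong W (collapse a c x) := rfl
    rw [this]
    by_cases hxa : x = a
    · subst hxa
      rw [collapse_apply_self, pushAlong_apply W c]
      simp [SimpleGraph.Walk.start_mem_support]
    · rw [collapse_apply_of_ne _ hxa, pushAlong_apply W x]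
      simp [SimpleGraph.Walk.support_cons, hxa]

lemma pushAlong_mem' : ∀ {a b : X} (W : G.Walk a b),
    pushAlong W ∈ flowSemigroup G.Adj ∨ pushAlong W = 1
  | _, _, SimpleGraph.Walk.nil => Or.inr rfl
  | a, _, SimpleGraph.Walk.cons (v := c) h W => by
    have hgen : collapse a c ∈ flowSemigroup G.Adj :=
      Subsemigroup.subset_closure ⟨a, c, h, rfl⟩
    have heq : pushAlong (SimpleGraph.Walk.cons h W) = pushAlong W * collapse a c := rfl
    rw [heq]
    rcases pushAlong_mem' W with hm | hm
    · exact Or.inl (mul_mem hm hgen)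
    · rw [hm, one_mul]; exact Or.inl hgen

lemma pushAlong_mem {a b : X} (W : G.Walk a b) (h : 0 < W.length) :
    pushAlong W ∈ flowSemigroup G.Adj := by
  cases W with
  | nil => simp at h
  | cons h' W' =>
    have hgen : collapse _ _ ∈ flowSemigroup G.Adj :=
      Subsemigroup.subset_closure ⟨_, _, h', rfl⟩
    have heq : pushAlong (SimpleGraph.Walk.cons h' W') = pushAlong W' * collapse _ _ := rfl
    rw [heq]
    rcases pushAlong_mem' W' with hm | hm
    · exact mul_mem hm hgen
    · rw [hm, one_mul]; exact hgen

lemma exists_walk_through (hconn : G.Connected) (l : List X) (b : X) :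
    ∃ a, ∃ W : G.Walk a b, ∀ x ∈ l, x ∈ W.support := by
  induction l with
  | nil => exact ⟨b, SimpleGraph.Walk.nil, by simp⟩
  | cons x l ih =>
    obtain ⟨a, W, h⟩ := ih
    obtain ⟨W₀⟩ := hconn.preconnected x a
    refine ⟨x, W₀.append W, ?_⟩
    intro y hy
    rw [SimpleGraph.Walk.mem_support_append_iff]
    rcases List.mem_cons.mp hy with rfl | hyl
    · exact Or.inl (SimpleGraph.Walk.start_mem_support _)
    · exact Or.inr (h y hyl)

lemma walk_length_zero_eq {a b : X} (W : G.Walk a b) (h : W.length = 0) : a = b := by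
  cases W with
  | nil => rfl
  | cons h' W' => simp at h

lemma exists_const_flow [Fintype X] (hconn : G.Connected) (hnt : Nontrivial X) (b : X) :
    ∃ s ∈ flowSemigroup G.Adj, ∀ x, s x = b := by
  obtain ⟨a, W, hW⟩ := exists_walk_through hconn Finset.univ.toList b
  have hx : ∀ x, x ∈ W.support := fun x => hW x (by simp)
  have hlen : 0 < W.length := by
    rcases Nat.eq_zero_or_pos W.length with h0 | h
    · exfalso
      have hsl : W.support.length = 1 := by
        rw [SimpleGraph.Walk.length_support, h0]
      obtain ⟨c, hc⟩ := List.length_eq_one_iff.mp hsl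
      obtain ⟨y₁, y₂, hy⟩ := hnt
      have h₁ := hx y₁; have h₂ := hx y₂
      rw [hc, List.mem_singleton] at h₁ h₂
      exact hy (h₁.trans h₂.symm)
    · exact h
  exact ⟨pushAlong W, pushAlong_mem W hlen, fun x => by rw [pushAlong_apply]; simp [hx x]⟩

lemma move_hole {a t : X} (W : G.Walk a t) :
    ∀ (S : Set X), a ∈ S → t ∉ S → ∃ f ∈ flowSemigroup G.Adj, ∃ s' ∈ S, s' ∈ W.support ∧
      Set.BijOn f Sᶜ (((S \ {s'}) ∪ {t})ᶜ) := by
  induction W using SimpleGraph.Walk.concatRec with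
  | Hnil => intro S ha ht; exact absurd ha ht
  | Hconcat W' h' ih =>
    rename_i u v w
    intro S ha ht
    by_cases hv : v ∈ S
    · refine ⟨collapse w v, Subsemigroup.subset_closure ⟨w, v, h'.symm, rfl⟩, v, hv, ?_, ?_⟩
      · rw [SimpleGraph.Walk.support_concat]
        exact List.mem_append.mpr (Or.inl (SimpleGraph.Walk.end_mem_support _))
      · exact collapse_bijOn hv ht h'.ne'
    · obtain ⟨f₁, hf₁, s₁, hs₁S, hs₁supp, bij₁⟩ := ih S ha hv
      have htS₁ : w ∉ (S \ {s₁}) ∪ {v} := by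
        intro hmem
        rcases hmem with h1 | h1
        · exact ht h1.1
        · exact h'.ne' (Set.mem_singleton_iff.mp h1)
      have hvS₁ : v ∈ (S \ {s₁}) ∪ {v} := Or.inr rfl
      have bij₂ := collapse_bijOn hvS₁ htS₁ h'.ne'
      have hset : ((S \ {s₁}) ∪ {v}) \ {v} ∪ {w} = (S \ {s₁}) ∪ {w} := by
        have : v ∉ S \ {s₁} := fun hc => hv hc.1
        ext z
        simp only [Set.mem_union, Set.mem_diff, Set.mem_singleton_iff]
        constructor
        · rintro (⟨(h1 | h1), h2⟩ | h1)
          · exact Or.inl h1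
          · exact absurd h1 h2
          · exact Or.inr h1
        · rintro (h1 | h1)
          · exact Or.inl ⟨Or.inl h1, fun hc => hv (hc ▸ h1.1)⟩
          · exact Or.inr h1
      rw [hset] at bij₂
      refine ⟨collapse w v * f₁, mul_mem (Subsemigroup.subset_closure ⟨w, v, h'.symm, rfl⟩) hf₁,
        s₁, hs₁S, ?_, ?_⟩
      · rw [SimpleGraph.Walk.support_concat]
        exact List.mem_append.mpr (Or.inl hs₁supp)
      · exact bij₂.comp bij₁

end Moves

section MoveHoles

set_option linter.unusedSectionVars false

open SimpleGraph

variable {X : Type*} [DecidableEq X] [Fintype X] {G : SimpleGraph X}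

lemma diff_nonempty_symm {S T : Set X} (hcard : S.ncard = T.ncard) (h : (S \ T).Nonempty) :
    (T \ S).Nonempty := by
  by_contra hc
  rw [Set.not_nonempty_iff_eq_empty, Set.diff_eq_empty] at hc
  have : T = S := Set.eq_of_subset_of_ncard_le hc (le_of_eq hcard) (Set.toFinite S)
  subst this
  simp at h

lemma move_holes [Nonempty X] (hconn : G.Connected) (S T : Set X) (hcard : S.ncard = T.ncard) :
    ∃ f : Function.End X, (f ∈ flowSemigroup G.Adj ∨ f = 1) ∧ Set.BijOn f Sᶜ Tᶜ := by
  suffices H : ∀ n (S T : Set X), S.ncard = T.ncard → (S \ T).ncard = n →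
      ∃ f : Function.End X, (f ∈ flowSemigroup G.Adj ∨ f = 1) ∧ Set.BijOn f Sᶜ Tᶜ by
    exact H _ S T hcard rfl
  intro n
  induction n using Nat.strong_induction_on with
  | _ n IHn =>
  have CL : ∀ m (S T : Set X), S.ncard = T.ncard → (S \ T).ncard = n →
      ∀ s₀ t₀ (W : G.Walk s₀ t₀), s₀ ∈ S \ T → t₀ ∈ T \ S → W.length ≤ m →
      ∃ f : Function.End X, (f ∈ flowSemigroup G.Adj ∨ f = 1) ∧ Set.BijOn f Sᶜ Tᶜ := by
    intro m
    induction m using Nat.strong_induction_on with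
    | _ m IHm =>
    intro S T hcard hn s₀ t₀ W hs₀ ht₀ hWlen
    obtain ⟨f₁, hf₁, s', hs'S, hs'supp, bij₁⟩ := move_hole W S hs₀.1 (fun hc => ht₀.2 hc)
    set S₁ : Set X := (S \ {s'}) ∪ {t₀} with hS₁
    have hs'ne : s' ≠ t₀ := fun hc => ht₀.2 (hc ▸ hs'S)
    have hcard₁ : S₁.ncard = T.ncard := by
      rw [← hcard, hS₁, Set.union_singleton]
      exact Set.ncard_exchange (fun hc => ht₀.2 hc) hs'S
    by_cases hs'T : s' ∈ T
    · -- inner recursion: shorter walk from s₀ to s'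
      have hs₀S₁ : s₀ ∈ S₁ \ T := by
        constructor
        · left
          exact ⟨hs₀.1, fun hc => hs₀.2 ((Set.mem_singleton_iff.mp hc) ▸ hs'T)⟩
        · exact hs₀.2
      have hs'TS₁ : s' ∈ T \ S₁ := by
        refine ⟨hs'T, ?_⟩
        rintro (h1 | h1)
        · exact h1.2 rfl
        · exact hs'ne (Set.mem_singleton_iff.mp h1)
      have hn₁ : (S₁ \ T).ncard = n := by
        rw [← hn]
        congr 1
        ext z
        simp only [hS₁, Set.mem_diff, Set.mem_union, Set.mem_singleton_iff]
        constructor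
        · rintro ⟨(h1 | h1), h2⟩
          · exact ⟨h1.1, h2⟩
          · exact absurd (h1 ▸ ht₀.1) h2
        · rintro ⟨h1, h2⟩
          exact ⟨Or.inl ⟨h1, fun hc => h2 (hc ▸ hs'T)⟩, h2⟩
      have hW' : (W.takeUntil s' hs'supp).length < W.length := by
        have hspec := W.take_spec hs'supp
        have hlen := congrArg Walk.length hspec
        rw [Walk.length_append] at hlen
        have hdrop : 0 < (W.dropUntil s' hs'supp).length := by
          rcases Nat.eq_zero_or_pos (W.dropUntil s' hs'supp).length with h0 | h
          · exact absurd (walk_length_zero_eq _ h0) hs'ne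
          · exact h
        omega
      obtain ⟨f₂, hf₂, bij₂⟩ := IHm (W.takeUntil s' hs'supp).length (by omega) S₁ T hcard₁ hn₁
        s₀ s' (W.takeUntil s' hs'supp) hs₀S₁ hs'TS₁ le_rfl
      refine ⟨f₂ * f₁, ?_, bij₂.comp bij₁⟩
      rcases hf₂ with h2 | h2
      · exact Or.inl (mul_mem h2 hf₁)
      · rw [h2, one_mul]; exact Or.inl hf₁
    · -- outer recursion: a hole of S \ T has been consumed
      have hn₁ : (S₁ \ T).ncard = n - 1 := by
        have heq : S₁ \ T = (S \ T) \ {s'} := by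
          ext z
          simp only [hS₁, Set.mem_diff, Set.mem_union, Set.mem_singleton_iff]
          constructor
          · rintro ⟨(h1 | h1), h2⟩
            · exact ⟨⟨h1.1, h2⟩, h1.2⟩
            · exact absurd (h1 ▸ ht₀.1) h2
          · rintro ⟨⟨h1, h2⟩, h3⟩
            exact ⟨Or.inl ⟨h1, h3⟩, h2⟩
        rw [heq, ← hn]
        exact Set.ncard_diff_singleton_of_mem ⟨hs'S, hs'T⟩
      have hnpos : 0 < n := by
        rw [← hn]
        exact Set.ncard_pos (Set.toFinite _) |>.mpr ⟨s₀, hs₀⟩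
      obtain ⟨f₂, hf₂, bij₂⟩ := IHn (n - 1) (by omega) S₁ T hcard₁ hn₁
      refine ⟨f₂ * f₁, ?_, bij₂.comp bij₁⟩
      rcases hf₂ with h2 | h2
      · exact Or.inl (mul_mem h2 hf₁)
      · rw [h2, one_mul]; exact Or.inl hf₁
  intro S T hcard hn
  rcases Set.eq_empty_or_nonempty (S \ T) with he | hne
  · rw [Set.diff_eq_empty] at he
    have : S = T := Set.eq_of_subset_of_ncard_le he (le_of_eq hcard.symm) (Set.toFinite T)
    subst this
    exact ⟨1, Or.inr rfl, Set.bijOn_id _⟩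
  · obtain ⟨t₀, ht₀⟩ := diff_nonempty_symm hcard hne
    obtain ⟨s₀, hs₀⟩ := hne
    obtain ⟨W⟩ := hconn.preconnected s₀ t₀
    exact CL W.length S T hcard hn s₀ t₀ W hs₀ ht₀ le_rfl

end MoveHoles

section Transfer

set_option linter.unusedSectionVars false

variable {Y X : Type*} [DecidableEq Y] [DecidableEq X]

lemma flow_transfer {E : Y → Y → Prop} {F : X → X → Prop} {φ : Y → X}
    (hφ : Function.Injective φ) (hadj : ∀ a b, E a b → F (φ a) (φ b))
    {s : Function.End Y} (hs : s ∈ flowSemigroup E) :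
    ∃ S ∈ flowSemigroup F, (∀ y, S (φ y) = φ (s y)) ∧ ∀ x, x ∉ Set.range φ → S x = x := by
  induction hs using Subsemigroup.closure_induction with
  | mem f hf =>
    obtain ⟨u, v, huv, rfl⟩ := hf
    refine ⟨collapse (φ u) (φ v), Subsemigroup.subset_closure ⟨_, _, hadj u v huv, rfl⟩, ?_, ?_⟩
    · intro y
      by_cases hy : y = u
      · subst hy; rw [collapse_apply_self, collapse_apply_self]
      · rw [collapse_apply_of_ne _ (fun hc => hy (hφ hc)), collapse_apply_of_ne _ hy]
    · intro x hx
      have hne : x ≠ φ u := fun hc => hx ⟨u, hc.symm⟩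
      exact collapse_apply_of_ne _ hne
  | mul f g hf hg ihf ihg =>
    obtain ⟨Sf, hSf, hSf1, hSf2⟩ := ihf
    obtain ⟨Sg, hSg, hSg1, hSg2⟩ := ihg
    refine ⟨Sf * Sg, mul_mem hSf hSg, ?_, ?_⟩
    · intro y
      rw [end_mul_apply, hSg1, hSf1]
      rfl
    · intro x hx
      rw [end_mul_apply, hSg2 x hx, hSf2 x hx]

lemma perm_subsingleton {Z : Type*} (h : Subsingleton Z) : Subsingleton (Equiv.Perm Z) :=
  ⟨fun a b => Equiv.ext fun x => Subsingleton.elim _ _⟩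

lemma defect_top_transfer [Finite X] [Finite Y] {E : Y → Y → Prop} {F : X → X → Prop}
    (e : Y ≃ X) (hadj : ∀ a b, E a b → F (e a) (e b)) (k : ℕ)
    (hE : ∀ K : Set Y, K.ncard = k → defectGroup E K = ⊤) :
    ∀ K : Set X, K.ncard = k → defectGroup F K = ⊤ := by
  intro K hK
  set K₀ : Set Y := e ⁻¹' K with hK₀
  have hKimg : K = e '' K₀ := by rw [hK₀, Set.image_preimage_eq _ e.surjective]
  have hcard₀ : K₀.ncard = k := by
    rw [hKimg, Set.ncard_image_of_injective _ e.injective] at hK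
    exact hK
  have hmemiff : ∀ y : Y, y ∉ K₀ ↔ (e y : X) ∉ K := fun y => Iff.rfl
  let ce : {y : Y // y ∉ K₀} ≃ {x : X // x ∉ K} :=
    e.subtypeEquiv (fun y => not_iff_not.mpr Iff.rfl)
  have htrans : ∀ σ : Equiv.Perm {y : Y // y ∉ K₀}, Realizes E K₀ σ →
      Realizes F K (ce.permCongr σ) := by
    intro σ ⟨s, hs, hsK, hsc⟩
    obtain ⟨S, hS, hS1, _⟩ := flow_transfer e.injective hadj hs
    refine ⟨S, hS, ?_, ?_⟩
    · intro x hx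
      have hy : e.symm x ∈ K₀ := by
        rw [hK₀, Set.mem_preimage, e.apply_symm_apply]
        exact hx
      have : S x = e (s (e.symm x)) := by
        conv_lhs => rw [← e.apply_symm_apply x]
        rw [hS1]
      rw [this]
      intro hc
      exact hsK _ hy (by rwa [hK₀, Set.mem_preimage])
    · intro x hx
      have hy : e.symm x ∉ K₀ := by
        rw [hK₀, Set.mem_preimage, e.apply_symm_apply]
        exact hx
      have hSx : S x = e (s (e.symm x)) := by
        conv_lhs => rw [← e.apply_symm_apply x]
        rw [hS1]
      rw [hSx, hsc _ hy]
      have hsymm : ce.symm ⟨x, hx⟩ = ⟨e.symm x, hy⟩ := by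
        apply Subtype.ext
        simp [ce]
      rw [Equiv.permCongr_apply, hsymm]
      simp [ce]
  rcases subsingleton_or_nontrivial {x : X // x ∉ K} with hsub | hnt
  · haveI := perm_subsingleton hsub
    exact Subsingleton.elim _ _
  · haveI hnt' : Nontrivial {y : Y // y ∉ K₀} := ce.nontrivial
    have htop := hE K₀ hcard₀
    have hne := realizes_nonempty_of_top (K := K₀) (E := E) hnt' htop
    have hall := realizes_of_top htop hne
    apply defectGroup_eq_top_of_all
    intro τ
    have := htrans (ce.permCongr.symm τ) (hall _)
    rwa [Equiv.apply_symm_apply] at this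

end Transfer

section Core

set_option linter.unusedSectionVars false
set_option maxHeartbeats 1000000

open SimpleGraph Equiv

variable {X : Type*} [DecidableEq X] [Fintype X] {G : SimpleGraph X}

lemma mem_flow_opt {fs : Subsemigroup (Function.End X)} {f g s : Function.End X}
    (hf : f ∈ fs ∨ f = 1) (hs : s ∈ fs) (hg : g ∈ fs ∨ g = 1) : g * s * f ∈ fs := by
  rcases hf with hf | hf <;> rcases hg with hg | hg
  · exact mul_mem (mul_mem hg hs) hf
  · rw [hg, one_mul]; exact mul_mem hs hf
  · rw [hf, mul_one]; exact mul_mem hg hs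
  · rw [hf, hg, one_mul, mul_one]; exact hs

lemma core_lemma (hconn : G.Connected) (k : ℕ) (hk : 2 ≤ k)
    (hcard : k + 2 ≤ Fintype.card X)
    (w x₁ u a b : X) (q : G.Walk x₁ u)
    (hlenq : q.length ≤ k - 2)
    (huw : G.Adj u w)
    (hx₁a : G.Adj x₁ a) (hx₁b : G.Adj x₁ b) (hab : a ≠ b)
    (haw : a ≠ w) (hbw : b ≠ w)
    (haq : a ∉ q.support) (hbq : b ∉ q.support) (hwq : w ∉ q.support)
    (HReal : ∀ (K : Set X) (hw : w ∉ K), K.ncard = k →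
      ∀ ρ : Equiv.Perm {x : X // x ∉ K}, ρ ⟨w, hw⟩ = ⟨w, hw⟩ → Realizes G.Adj K ρ) :
    ∀ K : Set X, K.ncard = k → defectGroup G.Adj K = ⊤ := by
  haveI : Nonempty X := by
    rw [← Fintype.card_pos_iff]
    omega
  -- Build the special hole set K'
  set B₀f : Finset X := q.support.toFinset ∪ {a} with hB₀f
  have hB₀card : B₀f.card ≤ k := by
    have h1 : q.support.toFinset.card ≤ q.length + 1 := by
      have := q.support.toFinset_card_le
      rwa [SimpleGraph.Walk.length_support] at this
    have h2 : B₀f.card ≤ q.support.toFinset.card + 1 := by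
      refine le_trans (Finset.card_union_le _ _) ?_
      simp
    omega
  set rest : Finset X := Finset.univ \ (B₀f ∪ {b, w}) with hrest
  have hrestcard : k - B₀f.card ≤ rest.card := by
    have h1 : rest.card = Fintype.card X - (B₀f ∪ {b, w}).card := by
      rw [hrest, Finset.card_sdiff_of_subset (Finset.subset_univ _), Finset.card_univ]
    have h2 : (B₀f ∪ {b, w}).card ≤ B₀f.card + 2 := by
      refine le_trans (Finset.card_union_le _ _) ?_
      have : ({b, w} : Finset X).card ≤ 2 := Finset.card_insert_le b {w} |>.trans (by simp)
      omega
    omega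
  obtain ⟨pads, hpads_sub, hpads_card⟩ := Finset.exists_subset_card_eq hrestcard
  set K'f : Finset X := B₀f ∪ pads with hK'f
  have hdisj : Disjoint B₀f pads := by
    rw [Finset.disjoint_left]
    intro x hx hxp
    have := hpads_sub hxp
    rw [hrest, Finset.mem_sdiff] at this
    exact this.2 (Finset.mem_union_left _ hx)
  have hK'fcard : K'f.card = k := by
    rw [hK'f, Finset.card_union_of_disjoint hdisj, hpads_card]
    omega
  set K' : Set X := (K'f : Set X) with hK'
  have hK'card : K'.ncard = k := by rw [hK', Set.ncard_coe_finset, hK'fcard]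
  have hpads_notbw : ∀ x ∈ pads, x ≠ b ∧ x ≠ w := by
    intro x hx
    have := hpads_sub hx
    rw [hrest, Finset.mem_sdiff] at this
    constructor <;> intro hc <;> subst hc <;>
      exact this.2 (Finset.mem_union_right _ (by simp))
  have hwK' : w ∉ K' := by
    rw [hK', Finset.mem_coe, hK'f, Finset.mem_union]
    rintro (h1 | h1)
    · rw [hB₀f, Finset.mem_union] at h1
      rcases h1 with h2 | h2
      · exact hwq (List.mem_toFinset.mp h2)
      · exact haw (Finset.mem_singleton.mp h2).symm
    · exact (hpads_notbw w h1).2 rfl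
  have hbK' : b ∉ K' := by
    rw [hK', Finset.mem_coe, hK'f, Finset.mem_union]
    rintro (h1 | h1)
    · rw [hB₀f, Finset.mem_union] at h1
      rcases h1 with h2 | h2
      · exact hbq (List.mem_toFinset.mp h2)
      · exact hab (Finset.mem_singleton.mp h2).symm
    · exact (hpads_notbw b h1).1 rfl
  have haK' : a ∈ K' := by
    rw [hK', Finset.mem_coe, hK'f]
    exact Finset.mem_union_left _ (Finset.mem_union_right _ (by simp))
  have hsuppK' : ∀ x ∈ q.support, x ∈ K' := by
    intro x hx
    rw [hK', Finset.mem_coe, hK'f]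
    exact Finset.mem_union_left _ (Finset.mem_union_left _ (List.mem_toFinset.mpr hx))
  have hx₁K' : x₁ ∈ K' := hsuppK' x₁ q.start_mem_support
  -- the permutations fixing ⟨w⟩ are all realized
  have hfix : ∀ ρ : Equiv.Perm {x : X // x ∉ K'}, ρ ⟨w, hwK'⟩ = ⟨w, hwK'⟩ →
      Realizes G.Adj K' ρ := HReal K' hwK' hK'card
  -- the dance: realize the transposition of w and b
  set W₁ : G.Walk w a := (SimpleGraph.Walk.cons huw.symm q.reverse).concat hx₁a with hW₁def
  set W₂ : G.Walk b w := (SimpleGraph.Walk.cons hx₁b.symm q).concat huw with hW₂def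
  set W₃ : G.Walk a b :=
    SimpleGraph.Walk.cons hx₁a.symm (SimpleGraph.Walk.cons hx₁b SimpleGraph.Walk.nil) with hW₃def
  have memW₁ : ∀ x : X, x ∈ W₁.support ↔ (x = w ∨ x ∈ q.support ∨ x = a) := by
    intro x
    rw [hW₁def]
    simp [SimpleGraph.Walk.support_concat, SimpleGraph.Walk.support_cons,
      SimpleGraph.Walk.support_reverse, List.concat_eq_append]
    try tauto
  have memW₂ : ∀ x : X, x ∈ W₂.support ↔ (x = b ∨ x ∈ q.support ∨ x = w) := by
    intro x
    rw [hW₂def]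
    simp [SimpleGraph.Walk.support_concat, SimpleGraph.Walk.support_cons,
      List.concat_eq_append]
    try tauto
  have memW₃ : ∀ x : X, x ∈ W₃.support ↔ (x = a ∨ x = x₁ ∨ x = b) := by
    intro x
    rw [hW₃def]
    simp [SimpleGraph.Walk.support_cons]
  set s_d : Function.End X := pushAlong W₃ * pushAlong W₂ * pushAlong W₁ with hs_d
  have hsd_mem : s_d ∈ flowSemigroup G.Adj := by
    rw [hs_d]
    refine mul_mem (mul_mem (pushAlong_mem W₃ ?_) (pushAlong_mem W₂ ?_)) (pushAlong_mem W₁ ?_)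
    · rw [hW₃def]; simp
    · rw [hW₂def, SimpleGraph.Walk.length_concat]; omega
    · rw [hW₁def, SimpleGraph.Walk.length_concat]; omega
  have hwx₁ : w ≠ x₁ := fun hc => hwq (hc ▸ q.start_mem_support)
  have sdact : ∀ x : X, s_d x =
      if x = w ∨ x ∈ q.support ∨ x = a then b else if x = b then w else x := by
    intro x
    have h3 : s_d x = pushAlong W₃ (pushAlong W₂ (pushAlong W₁ x)) := rfl
    by_cases h1 : x = w ∨ x ∈ q.support ∨ x = a
    · rw [if_pos h1, h3, pushAlong_apply W₁, if_pos ((memW₁ x).mpr h1)]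
      rw [pushAlong_apply W₂, if_neg (by
        rw [memW₂]
        push_neg
        exact ⟨hab, haq, haw⟩)]
      rw [pushAlong_apply W₃, if_pos ((memW₃ a).mpr (Or.inl rfl))]
    · rw [if_neg h1, h3, pushAlong_apply W₁, if_neg (fun hc => h1 ((memW₁ x).mp hc))]
      push_neg at h1
      obtain ⟨hxw, hxsupp, hxa⟩ := h1
      by_cases hxb : x = b
      · rw [if_pos hxb]
        rw [pushAlong_apply W₂, if_pos ((memW₂ x).mpr (Or.inl hxb))]
        rw [pushAlong_apply W₃, if_neg (by
          rw [memW₃]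
          push_neg
          exact ⟨fun hc => haw hc.symm, hwx₁, fun hc => hbw hc.symm⟩)]
      · rw [if_neg hxb]
        rw [pushAlong_apply W₂, if_neg (by
          rw [memW₂]
          push_neg
          exact ⟨hxb, hxsupp, hxw⟩)]
        rw [pushAlong_apply W₃, if_neg (by
          rw [memW₃]
          push_neg
          exact ⟨hxa, fun hc => hxsupp (hc ▸ q.start_mem_support), hxb⟩)]
  -- the key transposition
  set wv : {x : X // x ∉ K'} := ⟨w, hwK'⟩ with hwv
  set bv : {x : X // x ∉ K'} := ⟨b, hbK'⟩ with hbv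
  have hwbne : wv ≠ bv := fun hc => hbw (congrArg Subtype.val hc).symm
  have hone : Realizes G.Adj K' (1 : Equiv.Perm {x : X // x ∉ K'}) := hfix 1 rfl
  obtain ⟨s₀, hs₀mem, hs₀K, hs₀c⟩ := hone
  have hτ : Realizes G.Adj K' (Equiv.swap wv bv) := by
    refine ⟨s_d * s₀, mul_mem hsd_mem hs₀mem, ?_, ?_⟩
    · intro x hx
      rw [end_mul_apply]
      have h0 : s₀ x ∉ K' := hs₀K x hx
      rw [sdact (s₀ x)]
      split_ifs with h1 h2
      · exact hbK'
      · exact hwK'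
      · exact h0
    · intro x hx
      rw [end_mul_apply, hs₀c x hx]
      have hx' : (↑((1 : Equiv.Perm {x : X // x ∉ K'}) ⟨x, hx⟩) : X) = x := rfl
      rw [hx', sdact x]
      by_cases hxw : x = w
      · subst hxw
        rw [if_pos (Or.inl rfl)]
        have : (⟨x, hx⟩ : {x : X // x ∉ K'}) = wv := by rw [hwv]
        rw [this, Equiv.swap_apply_left]
      · have hxsupp : x ∉ q.support := fun hc => hx (hsuppK' x hc)
        have hxa : x ≠ a := fun hc => hx (hc ▸ haK')
        rw [if_neg (by push_neg; exact ⟨hxw, hxsupp, hxa⟩)]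
        by_cases hxb : x = b
        · subst hxb
          rw [if_pos rfl]
          have : (⟨x, hx⟩ : {x : X // x ∉ K'}) = bv := by rw [hbv]
          rw [this, Equiv.swap_apply_right]
        · rw [if_neg hxb]
          have h1 : (⟨x, hx⟩ : {x : X // x ∉ K'}) ≠ wv := fun hc =>
            hxw (congrArg Subtype.val hc)
          have h2 : (⟨x, hx⟩ : {x : X // x ∉ K'}) ≠ bv := fun hc =>
            hxb (congrArg Subtype.val hc)
          rw [Equiv.swap_apply_of_ne_of_ne h1 h2]
  -- all transpositions (wv z) are realized
  have hswap : ∀ z : {x : X // x ∉ K'}, z ≠ wv → Realizes G.Adj K' (Equiv.swap wv z) := by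
    intro z hz
    by_cases hzb : z = bv
    · subst hzb; exact hτ
    · have h1 : Realizes G.Adj K' (Equiv.swap bv z) :=
        hfix _ (Equiv.swap_apply_of_ne_of_ne hwbne (Ne.symm hz))
      have h2 := (Realizes.mul h1 hτ).mul h1
      have heq : Equiv.swap bv z * (Equiv.swap wv bv * Equiv.swap bv z) = Equiv.swap wv z := by
        rw [← mul_assoc, Equiv.swap_mul_swap_mul_swap hwbne (Ne.symm hz), Equiv.swap_comm]
      rwa [heq] at h2
  -- all permutations realized at K'
  have hallK' : ∀ σ : Equiv.Perm {x : X // x ∉ K'}, Realizes G.Adj K' σ := by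
    intro σ
    by_cases hσw : σ wv = wv
    · exact hfix σ hσw
    · set z : {x : X // x ∉ K'} := σ wv with hzdef
      have hz : z ≠ wv := hσw
      have h1 := hswap z hz
      have hcomp : (Equiv.swap wv z * σ) wv = wv := by
        rw [Equiv.Perm.mul_apply, ← hzdef, Equiv.swap_apply_right]
      have h2 := hfix _ hcomp
      have h3 := Realizes.mul h2 h1
      have heq : Equiv.swap wv z * (Equiv.swap wv z * σ) = σ := by
        rw [← mul_assoc, Equiv.swap_mul_self, one_mul]
      rwa [heq] at h3
  -- transport to an arbitrary hole set K
  intro K hK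
  obtain ⟨f, hf, bijf⟩ := move_holes hconn K K' (hK.trans hK'card.symm)
  obtain ⟨g, hg, bijg⟩ := move_holes hconn K' K (hK'card.trans hK.symm)
  apply defectGroup_eq_top_of_all
  intro σ
  have hmapsf : ∀ z : {x : X // x ∉ K}, f z ∉ K' := fun z => bijf.mapsTo z.2
  have hmapsg : ∀ z : {x : X // x ∉ K'}, g z ∉ K := fun z => bijg.mapsTo z.2
  set F₁ : {x : X // x ∉ K} → {x : X // x ∉ K'} := fun z => ⟨f z, hmapsf z⟩ with hF₁
  set G₁ : {x : X // x ∉ K'} → {x : X // x ∉ K} := fun z => ⟨g z, hmapsg z⟩ with hG₁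
  have hF₁bij : Function.Bijective F₁ := by
    constructor
    · intro z₁ z₂ hz
      exact Subtype.ext (bijf.injOn z₁.2 z₂.2 (congrArg Subtype.val hz))
    · intro y
      obtain ⟨x, hx, hfx⟩ := bijf.surjOn y.2
      exact ⟨⟨x, hx⟩, Subtype.ext hfx⟩
  have hG₁bij : Function.Bijective G₁ := by
    constructor
    · intro z₁ z₂ hz
      exact Subtype.ext (bijg.injOn z₁.2 z₂.2 (congrArg Subtype.val hz))
    · intro y
      obtain ⟨x, hx, hgx⟩ := bijg.surjOn y.2
      exact ⟨⟨x, hx⟩, Subtype.ext hgx⟩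
  set E₁ : {x : X // x ∉ K} ≃ {x : X // x ∉ K'} := Equiv.ofBijective F₁ hF₁bij with hE₁
  set E₂ : {x : X // x ∉ K'} ≃ {x : X // x ∉ K} := Equiv.ofBijective G₁ hG₁bij with hE₂
  set π : Equiv.Perm {x : X // x ∉ K'} := (E₁.symm.trans σ).trans E₂.symm with hπ
  obtain ⟨s, hsmem, hsK, hsc⟩ := hallK' π
  have hsV : ∀ x : X, s x ∉ K' := by
    intro x
    by_cases hx : x ∈ K'
    · exact hsK x hx
    · rw [hsc x hx]; exact (π ⟨x, hx⟩).2
  refine ⟨g * s * f, mem_flow_opt hf hsmem hg, ?_, ?_⟩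
  · intro x hx
    show g (s (f x)) ∉ K
    exact hmapsg ⟨s (f x), hsV (f x)⟩
  · intro x hx
    show g (s (f x)) = _
    have h1 : f x = ↑(E₁ ⟨x, hx⟩) := rfl
    have h2 : s (f x) = ↑(π (E₁ ⟨x, hx⟩)) := by
      rw [hsc (f x) (hmapsf ⟨x, hx⟩)]
      congr 1
    have h3 : g (s (f x)) = ↑(E₂ (π (E₁ ⟨x, hx⟩))) := by
      rw [h2]
      rfl
    rw [h3]
    have h4 : E₂ (π (E₁ ⟨x, hx⟩)) = σ ⟨x, hx⟩ := by
      rw [hπ]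
      simp only [Equiv.trans_apply, Equiv.symm_apply_apply, Equiv.apply_symm_apply]
    rw [h4]

end Core

section Glue

set_option linter.unusedSectionVars false
set_option maxHeartbeats 1000000

open SimpleGraph

variable {V' : Type*} [Fintype V'] [DecidableEq V'] {Γ : SimpleGraph V'}

lemma all_realized {H : Γ.Subgraph} {k : ℕ} (hk1 : 1 ≤ k) (h : IsKSubgraph Γ k H)
    (K₀ : Set ↥H.verts) (hK₀ : K₀.ncard = k) : ∀ σ, Realizes H.coe.Adj K₀ σ := by
  obtain ⟨hc, hcard, hdef⟩ := h
  haveI : Fintype ↥H.verts := Fintype.ofFinite _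
  have hYcard : k < Fintype.card ↥H.verts := by
    rwa [← Nat.card_eq_fintype_card, Nat.card_coe_set_eq]
  have hex : ∃ b₀ : ↥H.verts, b₀ ∉ K₀ := by
    by_contra hc2
    push_neg at hc2
    have huniv : K₀ = Set.univ := Set.eq_univ_of_forall hc2
    have hcardeq : (Set.univ : Set ↥H.verts).ncard = Fintype.card ↥H.verts := by
      rw [Set.ncard_univ, Nat.card_eq_fintype_card]
    rw [huniv, hcardeq] at hK₀
    omega
  obtain ⟨b₀, hb₀⟩ := hex
  haveI hntV : Nontrivial ↥H.verts := by
    rw [← Fintype.one_lt_card_iff_nontrivial]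
    omega
  rcases subsingleton_or_nontrivial {y : ↥H.verts // y ∉ K₀} with hsub | hnt
  · intro σ
    obtain ⟨s, hs, hsc⟩ := exists_const_flow hc.coe hntV b₀
    refine ⟨s, hs, fun x _ => by rw [hsc]; exact hb₀, fun x hx => ?_⟩
    rw [hsc x]
    have h1 : (⟨x, hx⟩ : {y : ↥H.verts // y ∉ K₀}) = ⟨b₀, hb₀⟩ := Subsingleton.elim _ _
    have h2 : σ ⟨x, hx⟩ = ⟨x, hx⟩ := Subsingleton.elim _ _
    rw [h2]
    exact (congrArg Subtype.val h1).symm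
  · exact realizes_of_top (hdef K₀ hK₀) (realizes_nonempty_of_top hnt (hdef K₀ hK₀))

lemma isKSubgraph_mono_edge {k : ℕ} {H₁ H₂ : Γ.Subgraph}
    (h12 : H₁ ≤ H₂) (hverts : H₁.verts = H₂.verts) (h1 : IsKSubgraph Γ k H₁) :
    IsKSubgraph Γ k H₂ := by
  obtain ⟨hc, hcard, hdef⟩ := h1
  refine ⟨hc.mono h12 hverts, hverts ▸ hcard, ?_⟩
  refine defect_top_transfer (Equiv.setCongr hverts) (fun x y hxy => ?_) k hdef
  rw [Subgraph.coe_adj] at hxy ⊢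
  exact h12.2 hxy

/-- Lift a walk of the ambient graph, all of whose edges lie in a subgraph, to the
coercion graph of the subgraph. -/
def liftWalk (U : Γ.Subgraph) :
    ∀ {x y : V'} (p : Γ.Walk x y), p.toSubgraph ≤ U → ∀ (hx : x ∈ U.verts)
      (hy : y ∈ U.verts), U.coe.Walk ⟨x, hx⟩ ⟨y, hy⟩
  | _, _, SimpleGraph.Walk.nil, _, _, _ => SimpleGraph.Walk.nil
  | x, y, SimpleGraph.Walk.cons (v := c) h p', hp, hx, hy =>
      have hle : p'.toSubgraph ≤ U := le_trans le_sup_right hp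
      have hc : c ∈ U.verts := hle.1 p'.start_mem_verts_toSubgraph
      have hadj : U.Adj x c := hp.2 (by simp)
      SimpleGraph.Walk.cons (by rw [Subgraph.coe_adj]; exact hadj) (liftWalk U p' hle hc hy)

lemma liftWalk_support (U : Γ.Subgraph) :
    ∀ {x y : V'} (p : Γ.Walk x y) (hp : p.toSubgraph ≤ U) (hx : x ∈ U.verts)
      (hy : y ∈ U.verts) (z : ↥U.verts), z ∈ (liftWalk U p hp hx hy).support →
        (z : V') ∈ p.support
  | x, _, SimpleGraph.Walk.nil, hp, hx, hy, z, hz => by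
    rw [liftWalk] at hz
    simp at hz
    subst hz
    simp
  | x, y, SimpleGraph.Walk.cons (v := c) h p', hp, hx, hy, z, hz => by
    rw [liftWalk] at hz
    rw [SimpleGraph.Walk.support_cons] at hz ⊢
    rcases List.mem_cons.mp hz with h1 | h1
    · subst h1; simp
    · exact List.mem_cons.mpr (Or.inr (liftWalk_support U p' _ _ hy z h1))

lemma liftWalk_length (U : Γ.Subgraph) :
    ∀ {x y : V'} (p : Γ.Walk x y) (hp : p.toSubgraph ≤ U) (hx : x ∈ U.verts)
      (hy : y ∈ U.verts), (liftWalk U p hp hx hy).length = p.length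
  | _, _, SimpleGraph.Walk.nil, _, _, _ => rfl
  | x, y, SimpleGraph.Walk.cons (v := c) h p', hp, hx, hy => by
    rw [liftWalk]
    rw [SimpleGraph.Walk.length_cons, SimpleGraph.Walk.length_cons,
      liftWalk_length U p' _ _ hy]

end Glue

section Pend

set_option linter.unusedSectionVars false
set_option maxHeartbeats 1600000

open SimpleGraph

variable {V' : Type*} [Fintype V'] [DecidableEq V'] {Γ : SimpleGraph V'}

lemma pend_extension {k : ℕ} (hk : 2 ≤ k) {H' : Γ.Subgraph} (hH' : IsKSubgraph Γ k H')
    {u w : V'} (hadj : Γ.Adj u w) (hu : u ∈ H'.verts) (hw : w ∉ H'.verts)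
    {x₁ a b : V'} (q : Γ.Walk x₁ u) (hqle : q.toSubgraph ≤ H')
    (hqlen : q.length ≤ k - 2)
    (hH'a : H'.Adj x₁ a) (hH'b : H'.Adj x₁ b) (hab : a ≠ b)
    (haq : a ∉ q.support) (hbq : b ∉ q.support) :
    IsKSubgraph Γ k (H' ⊔ Γ.subgraphOfAdj hadj) := by
  set U : Γ.Subgraph := H' ⊔ Γ.subgraphOfAdj hadj with hU
  haveI : Fintype ↥U.verts := Fintype.ofFinite _
  haveI : Fintype ↥H'.verts := Fintype.ofFinite _
  have hmemU : ∀ z : V', z ∈ U.verts ↔ (z ∈ H'.verts ∨ z = w) := by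
    intro z
    rw [hU, Subgraph.verts_sup, Set.mem_union, subgraphOfAdj_verts]
    simp only [Set.mem_insert_iff, Set.mem_singleton_iff]
    constructor
    · rintro (h | h | h)
      · exact Or.inl h
      · exact Or.inl (h ▸ hu)
      · exact Or.inr h
    · rintro (h | h)
      · exact Or.inl h
      · exact Or.inr (Or.inr h)
  have hsubverts : H'.verts ⊆ U.verts := fun z hz => (hmemU z).mpr (Or.inl hz)
  have hx₁H : x₁ ∈ H'.verts := hH'a.fst_mem
  have haH : a ∈ H'.verts := hH'a.snd_mem
  have hbH : b ∈ H'.verts := hH'b.snd_mem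
  have hqsupp : ∀ z ∈ q.support, z ∈ H'.verts := by
    intro z hz
    exact hqle.1 ((q.mem_verts_toSubgraph).mpr hz)
  have hwU : w ∈ U.verts := (hmemU w).mpr (Or.inr rfl)
  have huU : u ∈ U.verts := hsubverts hu
  have hx₁U : x₁ ∈ U.verts := hsubverts hx₁H
  have haU : a ∈ U.verts := hsubverts haH
  have hbU : b ∈ U.verts := hsubverts hbH
  have hUconn : U.Connected := by
    refine Subgraph.connected_sup (hH'.1).preconnected (Subgraph.subgraphOfAdj_connected hadj).preconnected ⟨u, hu, ?_⟩
    rw [subgraphOfAdj_verts]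
    simp
  have hUvertseq : U.verts = insert w H'.verts := by
    ext z
    rw [hmemU z, Set.mem_insert_iff]
    tauto
  have hncardU : U.verts.ncard = H'.verts.ncard + 1 := by
    rw [hUvertseq, Set.ncard_insert_of_notMem hw (Set.toFinite _)]
  have hkH : k < H'.verts.ncard := hH'.2.1
  have hcardX : k + 2 ≤ Fintype.card ↥U.verts := by
    rw [← Nat.card_eq_fintype_card, Nat.card_coe_set_eq, hncardU]
    omega
  -- lifted data
  set wv : ↥U.verts := ⟨w, hwU⟩ with hwv
  set uv : ↥U.verts := ⟨u, huU⟩ with huv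
  set x₁v : ↥U.verts := ⟨x₁, hx₁U⟩ with hx₁v
  set av : ↥U.verts := ⟨a, haU⟩ with hav
  set bv : ↥U.verts := ⟨b, hbU⟩ with hbv
  have hqleU : q.toSubgraph ≤ U := le_trans hqle le_sup_left
  set qv : U.coe.Walk x₁v uv := liftWalk U q hqleU hx₁U huU with hqv
  have hqvlen : qv.length ≤ k - 2 := by
    rw [hqv, liftWalk_length]
    exact hqlen
  have hadjuw : U.coe.Adj uv wv := by
    rw [Subgraph.coe_adj]
    exact Subgraph.sup_adj.mpr (Or.inr (by simp [huv, hwv]))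
  have hadjxa : U.coe.Adj x₁v av := by
    rw [Subgraph.coe_adj]
    exact Subgraph.sup_adj.mpr (Or.inl hH'a)
  have hadjxb : U.coe.Adj x₁v bv := by
    rw [Subgraph.coe_adj]
    exact Subgraph.sup_adj.mpr (Or.inl hH'b)
  have habv : av ≠ bv := by
    intro hc
    have h : a = b := congrArg Subtype.val hc
    exact hab h
  have hawv : av ≠ wv := by
    intro hc
    have h : a = w := congrArg Subtype.val hc
    exact hw (h ▸ haH)
  have hbwv : bv ≠ wv := by
    intro hc
    have h : b = w := congrArg Subtype.val hc
    exact hw (h ▸ hbH)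
  have haqv : av ∉ qv.support := fun hc => haq (liftWalk_support U q hqleU hx₁U huU av hc)
  have hbqv : bv ∉ qv.support := fun hc => hbq (liftWalk_support U q hqleU hx₁U huU bv hc)
  have hwqv : wv ∉ qv.support := fun hc =>
    hw (hqsupp w (liftWalk_support U q hqleU hx₁U huU wv hc))
  -- the embedding of the old vertex set
  set ι : ↥H'.verts → ↥U.verts := fun y => ⟨↑y, hsubverts y.2⟩ with hι
  have hιinj : Function.Injective ι := by
    intro y₁ y₂ hy
    have h := congrArg Subtype.val hy
    exact Subtype.ext h
  have hwnotrange : wv ∉ Set.range ι := by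
    rintro ⟨y, hy⟩
    have h : (↑y : V') = w := congrArg Subtype.val hy
    exact hw (h ▸ y.2)
  have hrange : ∀ x : ↥U.verts, x ∉ Set.range ι → x = wv := by
    intro x hx
    rcases (hmemU ↑x).mp x.2 with hm | hm
    · exact absurd ⟨⟨↑x, hm⟩, Subtype.ext rfl⟩ hx
    · exact Subtype.ext hm
  have hadjmap : ∀ y₁ y₂ : ↥H'.verts, H'.coe.Adj y₁ y₂ → U.coe.Adj (ι y₁) (ι y₂) := by
    intro y₁ y₂ hy
    rw [Subgraph.coe_adj] at hy ⊢
    exact Subgraph.sup_adj.mpr (Or.inl hy)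
  -- the key HReal hypothesis for core_lemma
  have HReal : ∀ (K' : Set ↥U.verts) (hwK' : wv ∉ K'), K'.ncard = k →
      ∀ ρ : Equiv.Perm {x : ↥U.verts // x ∉ K'}, ρ ⟨wv, hwK'⟩ = ⟨wv, hwK'⟩ →
        Realizes U.coe.Adj K' ρ := by
    intro K' hwK' hK'card ρ hρfix
    set K₀ : Set ↥H'.verts := ι ⁻¹' K' with hK₀
    have hmemK₀ : ∀ y : ↥H'.verts, y ∈ K₀ ↔ ι y ∈ K' := fun y => Iff.rfl
    have himg : K' = ι '' K₀ := by
      ext x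
      constructor
      · intro hx
        have hxr : x ∈ Set.range ι := by
          by_contra hc
          exact hwK' ((hrange x hc) ▸ hx)
        obtain ⟨y, rfl⟩ := hxr
        exact ⟨y, hx, rfl⟩
      · rintro ⟨y, hy, rfl⟩
        exact hy
    have hK₀card : K₀.ncard = k := by
      rw [himg, Set.ncard_image_of_injective _ hιinj] at hK'card
      exact hK'card
    have hallY := all_realized (by omega) hH' K₀ hK₀card
    have hρne : ∀ z : {x : ↥U.verts // x ∉ K'}, z ≠ ⟨wv, hwK'⟩ → ρ z ≠ ⟨wv, hwK'⟩ :=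
      fun z hz hc => hz (ρ.injective (hc.trans hρfix.symm))
    set Φ : {y : ↥H'.verts // y ∉ K₀} → {x : ↥U.verts // x ∉ K'} :=
      fun z => ⟨ι ↑z, fun hc => z.2 hc⟩ with hΦ
    have hΦne : ∀ z, Φ z ≠ ⟨wv, hwK'⟩ := by
      intro z hc
      have h : ι ↑z = wv := congrArg Subtype.val hc
      exact hwnotrange (Set.mem_range.mpr ⟨↑z, h⟩)
    have hpull : ∀ (x : {x : ↥U.verts // x ∉ K'}), (↑x : ↥U.verts) ≠ wv →
        ∃ y : {y : ↥H'.verts // y ∉ K₀}, ι ↑y = ↑x := by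
      intro x hx
      have hxr : (↑x : ↥U.verts) ∈ Set.range ι := by
        by_contra hc
        exact hx (hrange _ hc)
      obtain ⟨y, hy⟩ := hxr
      have hyK₀ : y ∉ K₀ := fun hc => x.2 (hy ▸ ((hmemK₀ y).mp hc))
      exact ⟨⟨y, hyK₀⟩, hy⟩
    have hρΦne : ∀ z, (↑(ρ (Φ z)) : ↥U.verts) ≠ wv := fun z hc =>
      (hρne (Φ z) (hΦne z)) (Subtype.ext hc)
    set toF : {y : ↥H'.verts // y ∉ K₀} → {y : ↥H'.verts // y ∉ K₀} :=
      fun z => (hpull (ρ (Φ z)) (hρΦne z)).choose with htoF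
    have hspec : ∀ z, ι ↑(toF z) = ↑(ρ (Φ z)) :=
      fun z => (hpull (ρ (Φ z)) (hρΦne z)).choose_spec
    have htoFinj : Function.Injective toF := by
      intro z₁ z₂ hz
      have h1 : ι ↑(toF z₁) = ι ↑(toF z₂) := by rw [hz]
      rw [hspec z₁, hspec z₂] at h1
      have h2 : Φ z₁ = Φ z₂ := ρ.injective (Subtype.ext h1)
      have h3 : ι ↑z₁ = ι ↑z₂ := congrArg Subtype.val h2
      exact Subtype.ext (hιinj h3)
    set πY : Equiv.Perm {y : ↥H'.verts // y ∉ K₀} :=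
      Equiv.ofBijective toF (Finite.injective_iff_bijective.mp htoFinj) with hπY
    have hspecπ : ∀ z, ι ↑(πY z) = ↑(ρ (Φ z)) := hspec
    obtain ⟨sY, hsYmem, hsYK, hsYc⟩ := hallY πY
    obtain ⟨S, hSmem, hS1, hS2⟩ := flow_transfer hιinj hadjmap hsYmem
    refine ⟨S, hSmem, ?_, ?_⟩
    · intro x hxK'
      rw [himg] at hxK'
      obtain ⟨y, hyK₀, rfl⟩ := hxK'
      rw [hS1 y]
      exact fun hc => (hsYK y hyK₀) hc
    · intro x hx
      by_cases hxr : x ∈ Set.range ι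
      · obtain ⟨y, rfl⟩ := hxr
        have hyK₀ : y ∉ K₀ := fun hc => hx hc
        rw [hS1 y, hsYc y hyK₀]
        have heq := hspecπ ⟨y, hyK₀⟩
        rw [heq]
      · have hxw := hrange x hxr
        rw [hS2 x hxr]
        have hsub : (⟨x, hx⟩ : {x : ↥U.verts // x ∉ K'}) = ⟨wv, hwK'⟩ := Subtype.ext hxw
        rw [hsub, hρfix]
        exact hxw
  have hdefU := core_lemma (G := U.coe) hUconn.coe k hk hcardX wv x₁v uv av bv qv
    hqvlen hadjuw hadjxa hadjxb habv hawv hbwv haqv hbqv hwqv HReal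
  exact ⟨hUconn, by omega, hdefU⟩

end Pend

section Final

set_option linter.unusedSectionVars false
set_option maxHeartbeats 1600000

open SimpleGraph

variable {V' : Type*} [Fintype V'] [DecidableEq V'] {Γ : SimpleGraph V'}

lemma gen_extension {k : ℕ} (hk : 2 ≤ k) {H : Γ.Subgraph} (hH : IsKSubgraph Γ k H)
    {a b : V'} (hab : a ≠ b) :
    ∀ {x₀ v : V'} (p : Γ.Walk x₀ v), x₀ ∈ H.verts → H.Adj x₀ a → H.Adj x₀ b →
      (∀ q : Γ.Walk x₀ v, p.length ≤ q.length) → p.length ≤ k - 1 →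
      a ∉ p.support → b ∉ p.support →
      IsKSubgraph Γ k (H ⊔ p.toSubgraph) := by
  intro x₀ v p
  induction p using SimpleGraph.Walk.concatRec with
  | Hnil =>
    rename_i u
    intro hx₀ _ _ _ _ _ _
    have hle : Γ.singletonSubgraph u ≤ H := (singletonSubgraph_le_iff u H).mpr hx₀
    have heq : H ⊔ (SimpleGraph.Walk.nil : Γ.Walk u u).toSubgraph = H := by
      show H ⊔ Γ.singletonSubgraph u = H
      exact sup_of_le_left hle
    rw [heq]
    exact hH
  | Hconcat q hadj IH =>
    rename_i u c v'
    intro hx₀ hHa hHb hshort hlenk ha hb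
    have hPsub : (q.concat hadj).toSubgraph = q.toSubgraph ⊔ Γ.subgraphOfAdj hadj := by
      rw [SimpleGraph.Walk.concat_eq_append, SimpleGraph.Walk.toSubgraph_append,
        SimpleGraph.Walk.toSubgraph_cons_nil_eq_subgraphOfAdj]
    have hEQ : H ⊔ (q.concat hadj).toSubgraph = (H ⊔ q.toSubgraph) ⊔ Γ.subgraphOfAdj hadj := by
      rw [hPsub, sup_assoc]
    have hshortq : ∀ q'' : Γ.Walk u c, q.length ≤ q''.length := by
      intro q''
      have h1 := hshort (q''.concat hadj)
      rw [SimpleGraph.Walk.length_concat, SimpleGraph.Walk.length_concat] at h1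
      omega
    have hlc : (q.concat hadj).length = q.length + 1 := SimpleGraph.Walk.length_concat _ _
    have hlenq2 : q.length ≤ k - 2 := by omega
    have hlenq1 : q.length ≤ k - 1 := by omega
    have hmemconcat : ∀ z : V', z ∈ q.support → z ∈ (q.concat hadj).support := by
      intro z hz
      rw [SimpleGraph.Walk.support_concat]
      exact List.mem_append.mpr (Or.inl hz)
    have haq : a ∉ q.support := fun hc => ha (hmemconcat a hc)
    have hbq : b ∉ q.support := fun hc => hb (hmemconcat b hc)
    have hH' := IH hx₀ hHa hHb hshortq hlenq1 haq hbq
    have hcH' : c ∈ (H ⊔ q.toSubgraph).verts := by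
      rw [Subgraph.verts_sup]
      exact Or.inr q.end_mem_verts_toSubgraph
    have hHa' : (H ⊔ q.toSubgraph).Adj u a := Subgraph.sup_adj.mpr (Or.inl hHa)
    have hHb' : (H ⊔ q.toSubgraph).Adj u b := Subgraph.sup_adj.mpr (Or.inl hHb)
    rw [hEQ]
    by_cases hvH' : v' ∈ (H ⊔ q.toSubgraph).verts
    · apply isKSubgraph_mono_edge le_sup_left ?_ hH'
      have hsubset : (Γ.subgraphOfAdj hadj).verts ⊆ (H ⊔ q.toSubgraph).verts := by
        rw [subgraphOfAdj_verts]
        intro z hz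
        rcases hz with rfl | hz
        · exact hcH'
        · rw [Set.mem_singleton_iff] at hz
          subst hz
          exact hvH'
      rw [Subgraph.verts_sup]
      exact (Set.union_eq_self_of_subset_right hsubset).symm
    · exact pend_extension hk hH' hadj hcH' hvH' q le_sup_right hlenq2 hHa' hHb' hab haq hbq

end Final


/-- Extending a `k`-subgraph along a shortest path of length at most `k-1` starting at a
vertex with two other neighbors in the subgraph yields a `k`-subgraph. -/
theorem stmt10 [Fintype V] [DecidableEq V] (Γ : SimpleGraph V) (k : ℕ) (hk : 2 ≤ k)
    (hconn : Γ.Connected) (H : Γ.Subgraph) (hH : IsKSubgraph Γ k H)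
    (x₁ v : V) (hx₁ : x₁ ∈ H.verts) (hv : v ∉ H.verts)
    (p : Γ.Walk x₁ v) (hpath : p.IsPath)
    (hshortest : ∀ q : Γ.Walk x₁ v, p.length ≤ q.length)
    (hlen : p.length ≤ k - 1)
    (hnbrs : ∃ a b : V, a ≠ b ∧ a ≠ p.getVert 1 ∧ b ≠ p.getVert 1 ∧
      H.Adj x₁ a ∧ H.Adj x₁ b) :
    IsKSubgraph Γ k (H ⊔ p.toSubgraph) := by
  obtain ⟨a, b, hab, ha1, hb1, hHa, hHb⟩ := hnbrs
  have hA : ∀ c : V, c ≠ p.getVert 1 → H.Adj x₁ c → c ∉ p.support := by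
    intro c hc1 hHc hmem
    have hΓc : Γ.Adj x₁ c := hHc.adj_sub
    have hcx₁ : x₁ ≠ c := hΓc.ne
    have hsplit := p.take_spec hmem
    have hlen2 : (p.takeUntil c hmem).length + (p.dropUntil c hmem).length = p.length := by
      rw [← SimpleGraph.Walk.length_append, hsplit]
    have hshort2 := hshortest (SimpleGraph.Walk.cons hΓc (p.dropUntil c hmem))
    rw [SimpleGraph.Walk.length_cons] at hshort2
    have ht0 : (p.takeUntil c hmem).length ≠ 0 := fun h0 => hcx₁ (walk_length_zero_eq _ h0)
    have ht1 : (p.takeUntil c hmem).length = 1 := by omega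
    have hget := congrArg (fun W : Γ.Walk x₁ v => W.getVert 1) hsplit
    simp only [SimpleGraph.Walk.getVert_append, ht1] at hget
    rw [if_neg (lt_irrefl 1)] at hget
    simp only [Nat.sub_self, SimpleGraph.Walk.getVert_zero] at hget
    exact hc1 hget
  exact gen_extension hk hH hab p hx₁ hHa hHb hshortest hlen (hA a ha1 hHa) (hA b hb1 hHb)
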